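/- Define f : ℝ → ℝ by f(x) = x² for |x| ≤ 6 and f(x) = x² + 1.5|x|(cos(|x| − 6) − 1) for |x| > 6. Then f is differentiable on ℝ, x⋆ = 0 is its global minimizer, and f satisfies the Regularity Condition RC(0.5, 0.5) globally: f'(x)·x ≥ (1/4)(f'(x))² + (1/4)x² for all x ∈ ℝ. -/

import Mathlib

open Real
set_option maxHeartbeats 1000000

lemma aux_small (t θ s c : ℝ) (ht : t = θ + 6) (hθ0 : 0 < θ) (h1 : θ ≤ 1)
    (hs0 : 0 ≤ s) (hsθ : s ≤ θ) (hcq : 1 - θ^2/2 ≤ c) (hc1 : c ≤ 1) :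
    (1.5*(c - 1) - 1.5*t*s)^2 ≤ 3*t^2 := by
  have ht0 : (0:ℝ) < t := by linarith
  have hr1 : 1.5*(c-1) - 1.5*t*s ≤ 0 := by nlinarith [mul_nonneg ht0.le hs0]
  have hr2 : -(0.75*θ^2 + 1.5*t*θ) ≤ 1.5*(c-1) - 1.5*t*s := by nlinarith
  have hsq : (1.5*(c-1) - 1.5*t*s)^2 ≤ (0.75*θ^2 + 1.5*t*θ)^2 := by nlinarith
  have e1 : θ^3 ≤ θ^2 := by nlinarith [mul_nonneg (sq_nonneg θ) (by linarith : (0:ℝ) ≤ 1 - θ)]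
  have e2 : θ^4 ≤ θ^2 := by
    nlinarith [mul_nonneg (mul_nonneg (sq_nonneg θ) hθ0.le) (by linarith : (0:ℝ) ≤ 1 - θ)]
  have e3 : θ^2 ≤ θ := by nlinarith [mul_nonneg hθ0.le (by linarith : (0:ℝ) ≤ 1 - θ)]
  have hfin : (0.75*θ^2 + 1.5*t*θ)^2 ≤ 3*t^2 := by
    rw [ht]; nlinarith [e1, e2, e3]
  linarith

lemma aux_big (t s c : ℝ) (ht7 : 7 ≤ t) (hsc : s^2 + c^2 = 1) (hc1 : c ≤ 1) :
    (1.5*(c - 1) - 1.5*t*s)^2 ≤ 3*t^2 := by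
  have ht0 : (0:ℝ) < t := by linarith
  set σ := |s| with hσ
  set γ := |c| with hγ
  have hσ0 : 0 ≤ σ := abs_nonneg _
  have hγ0 : 0 ≤ γ := abs_nonneg _
  have hσγ : σ^2 + γ^2 = 1 := by rw [hσ, hγ, sq_abs, sq_abs]; exact hsc
  have hss : s ≤ σ := le_abs_self s
  have hss' : -σ ≤ s := neg_abs_le s
  have hcγ : 1 - c ≤ 1 + γ := by have := neg_abs_le c; rw [← hγ] at this; linarith
  clear_value σ γ
  have hσ1 : σ ≤ 1 := by nlinarith
  have hA : γ + 7*σ ≤ 7.072 := by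
    nlinarith [sq_nonneg (7*γ - σ), sq_nonneg (γ + 7*σ - 7.072)]
  have hB : 1 - c + t*σ ≤ 1.1546 * t := by
    have h7 : 1 + γ ≤ 7*(1.1546 - σ) := by linarith
    have hmono : 7*(1.1546 - σ) ≤ t*(1.1546 - σ) := by
      have := mul_nonneg (by linarith : (0:ℝ) ≤ t - 7) (by linarith : (0:ℝ) ≤ 1.1546 - σ)
      nlinarith [this]
    nlinarith [hmono, h7, hcγ]
  have h2 : (1.5*(c-1) - 1.5*t*s)^2 ≤ (1.5*(1 - c + t*σ))^2 := by
    have key : 0 ≤ t*(σ - s) * (2*(1-c) + t*(σ + s)) :=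
      mul_nonneg (mul_nonneg ht0.le (by linarith))
        (by nlinarith [mul_nonneg ht0.le (by linarith : (0:ℝ) ≤ σ + s)])
    nlinarith [key]
  have h0 : (0:ℝ) ≤ 1 - c + t*σ := by nlinarith [mul_nonneg ht0.le hσ0]
  have h3 : (1.5*(1 - c + t*σ))^2 ≤ (1.5*(1.1546*t))^2 := by
    have := mul_le_mul hB hB h0 (by linarith : (0:ℝ) ≤ 1.1546*t)
    nlinarith [this]
  nlinarith [h2, h3]

lemma core_ineq (t : ℝ) (ht : 6 < t) :
    (1.5*(Real.cos (t-6) - 1) - 1.5*t*Real.sin (t-6))^2 ≤ 3*t^2 := by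
  rcases le_or_gt (t - 6) 1 with h1 | h1
  · exact aux_small t (t-6) _ _ (by ring) (by linarith) h1
      (Real.sin_nonneg_of_nonneg_of_le_pi (by linarith)
        (h1.trans (by linarith [Real.pi_gt_three])))
      (Real.sin_le (by linarith)) Real.one_sub_sq_div_two_le_cos (Real.cos_le_one _)
  · exact aux_big t _ _ (by linarith) (Real.sin_sq_add_cos_sq _) (Real.cos_le_one _)


noncomputable def Fex : ℝ → ℝ := fun x =>
  if |x| ≤ 6 then x ^ 2 else x ^ 2 + 1.5 * |x| * (Real.cos (|x| - 6) - 1)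

noncomputable def Dex (x : ℝ) : ℝ :=
  if |x| ≤ 6 then 2*x
  else if 0 < x then 2*x + (1.5*(Real.cos (x-6) - 1) - 1.5*x*Real.sin (x-6))
  else 2*x + (-(1.5*(Real.cos (-x-6) - 1)) - 1.5*x*Real.sin (-x-6))

lemma hgp (x : ℝ) : HasDerivAt (fun y : ℝ => y^2 + 1.5*y*(Real.cos (y-6) - 1))
    (2*x + (1.5*(Real.cos (x-6) - 1) - 1.5*x*Real.sin (x-6))) x := by
  have h1 : HasDerivAt (fun y : ℝ => y^2) (2*x) x := by simpa using hasDerivAt_pow 2 x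
  have hcos : HasDerivAt (fun y : ℝ => Real.cos (y-6)) (-Real.sin (x-6)) x := by
    simpa [Function.comp_def] using (Real.hasDerivAt_cos (x-6)).comp x ((hasDerivAt_id x).sub_const 6)
  have hy : HasDerivAt (fun y : ℝ => 1.5*y) 1.5 x := by
    simpa using (hasDerivAt_id x).const_mul (1.5:ℝ)
  have := h1.add (hy.mul (hcos.sub_const 1))
  exact this.congr_deriv (by ring)

lemma hgm (x : ℝ) : HasDerivAt (fun y : ℝ => y^2 + 1.5*(-y)*(Real.cos (-y-6) - 1))
    (2*x + (-(1.5*(Real.cos (-x-6) - 1)) - 1.5*x*Real.sin (-x-6))) x := by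
  have h1 : HasDerivAt (fun y : ℝ => y^2) (2*x) x := by simpa using hasDerivAt_pow 2 x
  have hin : HasDerivAt (fun y : ℝ => -y-6) (-1) x := by
    simpa using ((hasDerivAt_id x).neg.sub_const 6)
  have hcos : HasDerivAt (fun y : ℝ => Real.cos (-y-6)) (Real.sin (-x-6)) x := by
    have := (Real.hasDerivAt_cos (-x-6)).comp x hin
    simpa [Function.comp_def] using this
  have hy : HasDerivAt (fun y : ℝ => 1.5*(-y)) (-1.5) x := by
    simpa using ((hasDerivAt_id x).neg.const_mul (1.5:ℝ))
  have := h1.add (hy.mul (hcos.sub_const 1))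
  exact this.congr_deriv (by ring)

lemma Fex_eq_gp {y : ℝ} (hy : 6 ≤ y) : Fex y = y^2 + 1.5*y*(Real.cos (y-6) - 1) := by
  rcases eq_or_lt_of_le hy with rfl | hy'
  · simp [Fex]
  · have hy0 : (0:ℝ) < y := by linarith
    simp only [Fex, abs_of_pos hy0, if_neg (not_le.mpr hy')]

lemma Fex_eq_gm {y : ℝ} (hy : y ≤ -6) : Fex y = y^2 + 1.5*(-y)*(Real.cos (-y-6) - 1) := by
  rcases eq_or_lt_of_le hy with rfl | hy'
  · simp [Fex]
  · have hy0 : y < 0 := by linarith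
    have habs : |y| = -y := abs_of_neg hy0
    have h2 : ¬ -y ≤ 6 := by linarith
    simp only [Fex, habs, if_neg h2]

lemma hD (x : ℝ) : HasDerivAt Fex (Dex x) x := by
  rcases lt_trichotomy (|x|) 6 with h | h | h
  · -- interior
    have hsq : HasDerivAt (fun y : ℝ => y^2) (2*x) x := by simpa using hasDerivAt_pow 2 x
    have ho : IsOpen {y : ℝ | |y| < 6} := isOpen_lt continuous_abs continuous_const
    have hev : Fex =ᶠ[nhds x] (fun y : ℝ => y^2) := by
      filter_upwards [ho.mem_nhds h] with y hy
      simp only [Fex, if_pos (le_of_lt hy)]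
    have hd : HasDerivAt Fex (2*x) x := hsq.congr_of_eventuallyEq hev
    have : Dex x = 2*x := by simp [Dex, if_pos h.le]
    rw [this]; exact hd
  · rcases (abs_eq (by norm_num : (0:ℝ) ≤ 6)).mp h with rfl | rfl
    · -- x = 6
      have hleft : HasDerivWithinAt Fex 12 (Set.Iic 6) 6 := by
        have hsq : HasDerivAt (fun y : ℝ => y^2) 12 6 := by
          have := hasDerivAt_pow 2 (6:ℝ)
          norm_num at this
          exact this
        apply hsq.hasDerivWithinAt.congr_of_eventuallyEq
        · filter_upwards [mem_nhdsWithin_of_mem_nhds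
            (isOpen_Ioi.mem_nhds (by norm_num : (0:ℝ) < 6)), self_mem_nhdsWithin]
            with y hy1 hy2
          have : |y| ≤ 6 := abs_le.mpr ⟨by linarith [Set.mem_Ioi.mp hy1], hy2⟩
          simp only [Fex, if_pos this]
        · simp [Fex]
      have hright : HasDerivWithinAt Fex 12 (Set.Ici 6) 6 := by
        have h12 : HasDerivAt (fun y : ℝ => y^2 + 1.5*y*(Real.cos (y-6) - 1)) 12 6 := by
          have := hgp 6
          rw [show (2*(6:ℝ) + (1.5*(Real.cos ((6:ℝ)-6) - 1) - 1.5*6*Real.sin ((6:ℝ)-6))) = 12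
            from by norm_num] at this
          exact this
        exact h12.hasDerivWithinAt.congr (fun y hy => Fex_eq_gp hy) (Fex_eq_gp le_rfl)
      have := hleft.union hright
      rw [Set.Iic_union_Ici] at this
      have hd := hasDerivWithinAt_univ.mp this
      have : Dex 6 = 12 := by norm_num [Dex]
      rw [this]; exact hd
    · -- x = -6
      have hright : HasDerivWithinAt Fex (-12) (Set.Ici (-6)) (-6) := by
        have hsq : HasDerivAt (fun y : ℝ => y^2) (-12) (-6) := by
          have := hasDerivAt_pow 2 (-6:ℝ)
          norm_num at this
          exact this
        apply hsq.hasDerivWithinAt.congr_of_eventuallyEq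
        · filter_upwards [mem_nhdsWithin_of_mem_nhds
            (isOpen_Iio.mem_nhds (by norm_num : (-6:ℝ) < 0)), self_mem_nhdsWithin]
            with y hy1 hy2
          have : |y| ≤ 6 := abs_le.mpr ⟨hy2, by linarith [Set.mem_Iio.mp hy1]⟩
          simp only [Fex, if_pos this]
        · simp [Fex]
      have hleft : HasDerivWithinAt Fex (-12) (Set.Iic (-6)) (-6) := by
        have h12 : HasDerivAt (fun y : ℝ => y^2 + 1.5*(-y)*(Real.cos (-y-6) - 1)) (-12) (-6) := by
          have := hgm (-6)
          rw [show (2*(-6:ℝ) + (-(1.5*(Real.cos (-(-6:ℝ)-6) - 1)) - 1.5*(-6)*Real.sin (-(-6:ℝ)-6))) = -12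
            from by norm_num] at this
          exact this
        exact h12.hasDerivWithinAt.congr (fun y hy => Fex_eq_gm hy) (Fex_eq_gm le_rfl)
      have := hleft.union hright
      rw [Set.Iic_union_Ici] at this
      have hd := hasDerivWithinAt_univ.mp this
      have : Dex (-6) = -12 := by norm_num [Dex]
      rw [this]; exact hd
  · rcases lt_abs.mp h with hx | hx
    · -- x > 6
      have hev : Fex =ᶠ[nhds x] (fun y : ℝ => y^2 + 1.5*y*(Real.cos (y-6) - 1)) := by
        filter_upwards [isOpen_Ioi.mem_nhds (Set.mem_Ioi.mpr hx)] with y hy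
        exact Fex_eq_gp (le_of_lt hy)
      have hd := (hgp x).congr_of_eventuallyEq hev
      have : Dex x = 2*x + (1.5*(Real.cos (x-6) - 1) - 1.5*x*Real.sin (x-6)) := by
        rw [Dex, if_neg (not_le.mpr h), if_pos (by linarith : (0:ℝ) < x)]
      rw [this]; exact hd
    · -- x < -6
      have hx' : x < -6 := by linarith
      have hev : Fex =ᶠ[nhds x] (fun y : ℝ => y^2 + 1.5*(-y)*(Real.cos (-y-6) - 1)) := by
        filter_upwards [isOpen_Iio.mem_nhds (Set.mem_Iio.mpr hx')] with y hy
        exact Fex_eq_gm (le_of_lt hy)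
      have hd := (hgm x).congr_of_eventuallyEq hev
      have : Dex x = 2*x + (-(1.5*(Real.cos (-x-6) - 1)) - 1.5*x*Real.sin (-x-6)) := by
        rw [Dex, if_neg (not_le.mpr h), if_neg (by linarith : ¬ (0:ℝ) < x)]
      rw [this]; exact hd

lemma Fex_min (x : ℝ) : Fex 0 ≤ Fex x := by
  have h0 : Fex 0 = 0 := by simp [Fex]
  rw [h0]
  by_cases h : |x| ≤ 6
  · simp only [Fex, if_pos h]
    positivity
  · simp only [Fex, if_neg h]
    have h6 : 6 < |x| := not_le.mp h
    have hc : (-2:ℝ) ≤ Real.cos (|x|-6) - 1 := by linarith [Real.neg_one_le_cos (|x|-6)]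
    nlinarith [sq_abs x, abs_nonneg x, mul_le_mul_of_nonneg_left hc (abs_nonneg x),
      mul_le_mul h6.le h6.le (by norm_num) (abs_nonneg x)]

lemma main_ineq (x : ℝ) : Dex x * x ≥ 1/4 * Dex x ^ 2 + 1/4 * x ^ 2 := by
  by_cases h : |x| ≤ 6
  · simp only [Dex, if_pos h]
    nlinarith [sq_nonneg x]
  · rcases lt_abs.mp (not_le.mp h) with hx | hx
    · simp only [Dex, if_neg h, if_pos (show (0:ℝ) < x by linarith)]
      nlinarith [core_ineq x hx]
    · have hx' : x < -6 := by linarith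
      simp only [Dex, if_neg h, if_neg (show ¬ (0:ℝ) < x by linarith)]
      nlinarith [core_ineq (-x) (by linarith : (6:ℝ) < -x)]

/-- The piecewise loss function from the numerical example is differentiable,
has global minimizer `x⋆ = 0`, and satisfies the Regularity Condition RC(0.5, 0.5) globally. -/
theorem example_function_satisfies_RC :
    let f : ℝ → ℝ := fun x =>
      if |x| ≤ 6 then x ^ 2 else x ^ 2 + 1.5 * |x| * (Real.cos (|x| - 6) - 1)
    Differentiable ℝ f ∧
    (∀ x : ℝ, f 0 ≤ f x) ∧
    (∀ x : ℝ, deriv f x * x ≥ 1 / 4 * deriv f x ^ 2 + 1 / 4 * x ^ 2) := by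
  intro f
  have hf : f = Fex := rfl
  refine ⟨?_, ?_, ?_⟩
  · rw [hf]
    exact fun x => (hD x).differentiableAt
  · rw [hf]
    exact Fex_min
  · intro x
    rw [hf, (hD x).deriv]
    have := main_ineq x
    linarith
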